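/- Let g, h be real numbers, set a = g+h and b = g-h, let d ≥ 1 be an integer, and set ξ(η) = P_d^{(g-1/2,1/2-h)}(η) ∈ ℝ[η]. Let Y ∈ ℝ[η] be any polynomial and let X ∈ ℝ[η] satisfy X'(η) = ξ(η)Y(η). For a polynomial p ∈ ℝ[η] define Fp = ½(1+η)(ξ·p' - ξ'·p) + ½(h - ½)ξ·p ∈ ℝ[η]. Then for every polynomial p ∈ ℝ[η] the following polynomial identity holds: 2[ (1-η)·(X·Fp)' - (g + ½)·X·Fp ] = ξ·[ (1-η²) X p'' + ( -(b + (a+1)η)X + (1-η²)ξY ) p' + ( (d(d+1+b) - (g+½)(h-½))X + ((h-½)(1-η)ξ - (1-η²)ξ')Y ) p ]. -/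

import Mathlib

open Polynomial

/-- The Jacobi polynomial `P_n^{(α,β)}` with real parameters:
`P_n^{(α,β)}(x) = Σ_{k=0}^{n} (α+k+1)_{n-k} (n+α+β+1)_k / ((n-k)!·k!) · ((x-1)/2)^k`. -/
noncomputable def jacobiP (α β : ℝ) (n : ℕ) : Polynomial ℝ :=
  ∑ k ∈ Finset.range (n + 1),
    Polynomial.C ((ascPochhammer ℝ (n - k)).eval (α + k + 1) *
        (ascPochhammer ℝ k).eval ((n : ℝ) + α + β + 1) /
        ((n - k).factorial * k.factorial)) *
      (Polynomial.C ((2 : ℝ))⁻¹ * (Polynomial.X - 1)) ^ k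


noncomputable def jcoef (α β : ℝ) (n k : ℕ) : ℝ :=
  (ascPochhammer ℝ (n - k)).eval (α + k + 1) *
    (ascPochhammer ℝ k).eval ((n : ℝ) + α + β + 1) /
    ((n - k).factorial * k.factorial)

lemma jcoef_rec (α β : ℝ) (n k : ℕ) (hk : k < n) :
    ((k : ℝ) + 1) * (α + k + 1) * jcoef α β n (k + 1)
      = ((n : ℝ) - k) * ((n : ℝ) + k + α + β + 1) * jcoef α β n k := by
  obtain ⟨m, hm⟩ : ∃ m, n = m + 1 + k := ⟨n - k - 1, by omega⟩
  subst hm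
  have h1 : m + 1 + k - k = m + 1 := by omega
  have h2 : m + 1 + k - (k + 1) = m := by omega
  unfold jcoef
  rw [h1, h2]
  have hP : (ascPochhammer ℝ (m + 1)).eval (α + k + 1)
      = (α + k + 1) * (ascPochhammer ℝ m).eval (α + k + 1 + 1) := by
    rw [ascPochhammer_succ_left]
    simp [eval_comp]
  have hQ : (ascPochhammer ℝ (k + 1)).eval ((↑(m + 1 + k) : ℝ) + α + β + 1)
      = (ascPochhammer ℝ k).eval ((↑(m + 1 + k) : ℝ) + α + β + 1)
        * ((↑(m + 1 + k) : ℝ) + α + β + 1 + k) := ascPochhammer_succ_eval _ _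
  rw [hP, hQ, Nat.factorial_succ, Nat.factorial_succ]
  push_cast
  have hk1 : (k.factorial : ℝ) ≠ 0 := Nat.cast_ne_zero.2 k.factorial_ne_zero
  have hm1 : (m.factorial : ℝ) ≠ 0 := Nat.cast_ne_zero.2 m.factorial_ne_zero
  have harg : (α + (k:ℝ) + 1 + 1) = α + ((k:ℝ)+1) + 1 := by ring
  rw [harg]
  field_simp
  ring

noncomputable def jacobiP' (α β : ℝ) (n : ℕ) : Polynomial ℝ :=
  ∑ k ∈ Finset.range (n + 1),
    Polynomial.C (jcoef α β n k) * (Polynomial.C ((2 : ℝ))⁻¹ * (Polynomial.X - 1)) ^ k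

lemma hder (c : ℝ) (k : ℕ) :
    derivative (C c * (C ((2:ℝ))⁻¹ * (X - 1)) ^ k)
      = C (c * k * 2⁻¹) * (C ((2:ℝ))⁻¹ * (X - 1)) ^ (k - 1) := by
  rw [derivative_C_mul, derivative_pow]
  simp only [derivative_mul, derivative_C, derivative_sub, derivative_X, derivative_one,
    zero_mul, sub_zero, mul_one, zero_add, map_mul]
  ring

lemma jd1 (α β : ℝ) (n : ℕ) :
    derivative (jacobiP' α β n)
      = ∑ k ∈ Finset.range (n + 1),
          C (jcoef α β n k * k * 2⁻¹) * (C ((2:ℝ))⁻¹ * (X - 1)) ^ (k - 1) := by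
  rw [jacobiP', derivative_sum]
  exact Finset.sum_congr rfl fun k _ => hder _ _

lemma jd2 (α β : ℝ) (n : ℕ) :
    derivative (derivative (jacobiP' α β n))
      = ∑ k ∈ Finset.range (n + 1),
          C (jcoef α β n k * k * 2⁻¹ * (k - 1 : ℕ) * 2⁻¹) * (C ((2:ℝ))⁻¹ * (X - 1)) ^ (k - 1 - 1) := by
  rw [jd1, derivative_sum]
  exact Finset.sum_congr rfl fun k _ => hder _ _

lemma jacobi_ode_eval (α β : ℝ) (n : ℕ) (t : ℝ) :
    (1 - t ^ 2) * (derivative (derivative (jacobiP' α β n))).eval t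
      + ((β - α) - (α + β + 2) * t) * (derivative (jacobiP' α β n)).eval t
      + ((n : ℝ) * ((n : ℝ) + α + β + 1)) * (jacobiP' α β n).eval t = 0 := by
  rw [jd2, jd1, jacobiP']
  simp only [eval_finset_sum, eval_mul, eval_pow, eval_C, eval_sub, eval_X, eval_one]
  generalize hs : (2:ℝ)⁻¹ * (t - 1) = s
  have ht : t = 2 * s + 1 := by rw [← hs]; ring
  subst ht
  rw [Finset.mul_sum, Finset.mul_sum, Finset.mul_sum, ← Finset.sum_add_distrib,
    ← Finset.sum_add_distrib]
  have key : ∀ k ∈ Finset.range (n + 1),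
      (1 - (2 * s + 1) ^ 2) * (jcoef α β n k * k * 2⁻¹ * ((k - 1 : ℕ) : ℝ) * 2⁻¹ * s ^ (k - 1 - 1))
        + ((β - α) - (α + β + 2) * (2 * s + 1)) * (jcoef α β n k * k * 2⁻¹ * s ^ (k - 1))
        + (n : ℝ) * ((n : ℝ) + α + β + 1) * (jcoef α β n k * s ^ k)
      = jcoef α β n k * ((n : ℝ) - k) * ((n : ℝ) + k + α + β + 1) * s ^ k
        - jcoef α β n (k + 1) * ((k : ℝ) + 1) * (α + k + 1) * s ^ k
        + (jcoef α β n (k + 1) * ((k : ℝ) + 1) * (α + k + 1) * s ^ k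
           - jcoef α β n k * (k : ℝ) * ((k : ℝ) + α) * s ^ (k - 1)) := by
    intro k _
    match k with
    | 0 => simp; ring
    | 1 => push_cast; simp; ring
    | (j + 2) =>
      have e1 : j + 2 - 1 - 1 = j := rfl
      have e2 : j + 2 - 1 = j + 1 := rfl
      rw [e1, e2]
      push_cast
      ring
  rw [Finset.sum_congr rfl key, Finset.sum_add_distrib]
  have e1 : ∑ k ∈ Finset.range (n + 1),
      (jcoef α β n k * ((n : ℝ) - k) * ((n : ℝ) + k + α + β + 1) * s ^ k
        - jcoef α β n (k + 1) * ((k : ℝ) + 1) * (α + k + 1) * s ^ k)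
      = -(jcoef α β n (n + 1) * ((n : ℝ) + 1) * (α + n + 1) * s ^ n) := by
    rw [Finset.sum_range_succ]
    have e2 : ∑ k ∈ Finset.range n,
        (jcoef α β n k * ((n : ℝ) - k) * ((n : ℝ) + k + α + β + 1) * s ^ k
          - jcoef α β n (k + 1) * ((k : ℝ) + 1) * (α + k + 1) * s ^ k) = 0 := by
      apply Finset.sum_eq_zero
      intro k hk
      have hrec := jcoef_rec α β n k (Finset.mem_range.mp hk)
      linear_combination (-(s ^ k)) * hrec
    rw [e2]
    ring
  have e3 : ∑ k ∈ Finset.range (n + 1),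
      (jcoef α β n (k + 1) * ((k : ℝ) + 1) * (α + k + 1) * s ^ k
        - jcoef α β n k * (k : ℝ) * ((k : ℝ) + α) * s ^ (k - 1))
      = jcoef α β n (n + 1) * ((n : ℝ) + 1) * (α + n + 1) * s ^ n := by
    have e4 : ∀ k ∈ Finset.range (n + 1),
        (jcoef α β n (k + 1) * ((k : ℝ) + 1) * (α + k + 1) * s ^ k
          - jcoef α β n k * (k : ℝ) * ((k : ℝ) + α) * s ^ (k - 1))
        = (fun k => jcoef α β n k * (k : ℝ) * ((k : ℝ) + α) * s ^ (k - 1)) (k + 1)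
          - (fun k => jcoef α β n k * (k : ℝ) * ((k : ℝ) + α) * s ^ (k - 1)) k := by
      intro k _
      simp only [Nat.add_sub_cancel]
      push_cast
      ring
    rw [Finset.sum_congr rfl e4, Finset.sum_range_sub (fun k => jcoef α β n k * (k : ℝ) * ((k : ℝ) + α) * s ^ (k - 1)) (n + 1)]
    simp only [Nat.add_sub_cancel, Nat.cast_zero, Nat.cast_add, Nat.cast_one]
    push_cast
    ring
  rw [e1, e3]
  ring

lemma jacobiP_eq (α β : ℝ) (n : ℕ) : jacobiP α β n = jacobiP' α β n := rfl

/-- one-indexed (type I) Jacobi case with index `d ≥ 1`, denominator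
polynomial `ξ = P_d^{(g-1/2,1/2-h)}`, `a = g+h`, `b = g-h`, and `X` with `X' = ξY`.
With `Fp = ½(1+η)(ξp' - ξ'p) + ½(h-½)ξp`, for every polynomial `p`:
`2[(1-η)(X·Fp)' - (g+½)X·Fp]
  = ξ·[(1-η²)Xp'' + (-(b+(a+1)η)X + (1-η²)ξY)p'
      + ((d(d+1+b) - (g+½)(h-½))X + ((h-½)(1-η)ξ - (1-η²)ξ')Y)p]`. -/
theorem xjacobi_theta_operator_identity (g h : ℝ) (a b : ℝ)
    (ha : a = g + h) (hb : b = g - h) (d : ℕ) (hd : 1 ≤ d)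
    (ξ : Polynomial ℝ) (hξ : ξ = jacobiP (g - 1/2) (1/2 - h) d)
    (Y XX : Polynomial ℝ) (hX : Polynomial.derivative XX = ξ * Y)
    (p : Polynomial ℝ)
    (Fp : Polynomial ℝ)
    (hFp : Fp = Polynomial.C ((2 : ℝ))⁻¹ * (1 + Polynomial.X) *
        (ξ * Polynomial.derivative p - Polynomial.derivative ξ * p)
      + Polynomial.C ((h - 1/2) / 2) * ξ * p) :
    2 * ((1 - Polynomial.X) * Polynomial.derivative (XX * Fp)
        - Polynomial.C (g + 1/2) * (XX * Fp))
    = ξ * ((1 - Polynomial.X ^ 2) * XX * Polynomial.derivative (Polynomial.derivative p)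
        + (-((Polynomial.C b + Polynomial.C (a + 1) * Polynomial.X) * XX)
            + (1 - Polynomial.X ^ 2) * ξ * Y) * Polynomial.derivative p
        + (Polynomial.C ((d : ℝ) * ((d : ℝ) + 1 + b) - (g + 1/2) * (h - 1/2)) * XX
            + (Polynomial.C (h - 1/2) * (1 - Polynomial.X) * ξ
                - (1 - Polynomial.X ^ 2) * Polynomial.derivative ξ) * Y) * p) := by
  subst ha hb hFp
  apply Polynomial.funext
  intro t
  have hode := jacobi_ode_eval (g - 1/2) (1/2 - h) d t
  rw [← jacobiP_eq, ← hξ] at hode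
  simp only [derivative_mul, derivative_add, derivative_sub, derivative_C, derivative_X,
    derivative_one, hX]
  simp only [eval_mul, eval_add, eval_sub, eval_pow, eval_C, eval_X, eval_one, eval_neg,
    eval_ofNat, zero_mul, mul_zero, zero_add, add_zero, zero_sub, sub_zero, mul_one, one_mul]
  linear_combination (-(p.eval t * XX.eval t)) * hode
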